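/- Let K be a finite field, u a unit of K with u ≠ 1 and u ≠ −1, and let m be the size of the u-trinomial minimal solution over K. Then the u-trinomial minimal solution over K is irreducible if and only if for every integer l with 1 ≤ l ≤ ⌊m/6⌋ one has u^{2l} + u^{l+1} − 1 ≠ 0 and u^{2l} − u^{l+1} − 1 ≠ 0. -/

import Mathlib

set_option linter.unusedSectionVars false
set_option maxHeartbeats 1000000


namespace Quiddity

variable {A : Type*} [CommRing A]

/-- `mMat [a₁, …, aₙ]` is the matrix product `[[aₙ,-1],[1,0]] ⋯ [[a₁,-1],[1,0]]`. -/
def mMat : List A → Matrix (Fin 2) (Fin 2) A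
  | [] => 1
  | a :: t => mMat t * !![a, -1; 1, 0]

/-- Continuant: `cont [] = K₀ = 1`, `cont [a] = K₁(a) = a`, and the continuant recursion. -/
def cont : List A → A
  | [] => 1
  | [a] => a
  | a :: b :: t => a * cont (b :: t) - cont t

/-- A λ-quiddity is a tuple with `Mₙ(a₁,…,aₙ) = ± Id`. -/
def IsQuiddity (l : List A) : Prop := mMat l = 1 ∨ mMat l = -1

/-- The sum `⊕` of two tuples (meaningful for tuples of length ≥ 2):
`(a₁,…,aₘ) ⊕ (b₁,…,b_l) = (a₁+b_l, a₂,…,a_{m−1}, aₘ+b₁, b₂,…,b_{l−1})`. -/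
def oplus (la lb : List A) : List A :=
  (la.headD 0 + lb.getLastD 0) ::
    (la.tail.dropLast ++ (la.getLastD 0 + lb.headD 0) :: lb.tail.dropLast)

/-- Two tuples are equivalent if one is a cyclic permutation of the other or of its
reversal. -/
def TupleEquiv (l l' : List A) : Prop :=
  List.IsRotated l l' ∨ List.IsRotated l.reverse l'

/-- A λ-quiddity `c` is reducible if `c ∼ a ⊕ b` with `b` a λ-quiddity and both of size ≥ 3. -/
def QuiddityReducible (c : List A) : Prop :=
  ∃ a b : List A, 3 ≤ a.length ∧ 3 ≤ b.length ∧ IsQuiddity b ∧ TupleEquiv c (oplus a b)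

/-- `(a, b, a, b, …, a, b)` with `k` repetitions of the pair `(a, b)` (size `2k`). -/
def dynList : ℕ → A → A → List A
  | 0, _, _ => []
  | k + 1, a, b => a :: b :: dynList k a b

/-- `(u, v, v, u, v, v, …, u, v, v)` with `k` repetitions of the block `(u, v, v)`
(size `3k`). -/
def triList : ℕ → A → A → List A
  | 0, _, _ => []
  | k + 1, a, b => a :: b :: b :: triList k a b

end Quiddity

open Quiddity

namespace Quiddity

variable {A : Type*} [CommRing A]

theorem mMat_nil : mMat ([] : List A) = 1 := rfl
theorem mMat_cons (a : A) (t : List A) : mMat (a :: t) = mMat t * !![a, -1; 1, 0] := rfl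

theorem mMat_append (l₁ l₂ : List A) : mMat (l₁ ++ l₂) = mMat l₂ * mMat l₁ := by
  induction l₁ with
  | nil => simp [mMat]
  | cons a t ih => simp [mMat, ih, mul_assoc]

theorem mMat_det (l : List A) : (mMat l).det = 1 := by
  induction l with
  | nil => simp [mMat]
  | cons a t ih => simp [mMat, Matrix.det_mul, ih, Matrix.det_fin_two_of]

omit [CommRing A] in
theorem triList_length (n : ℕ) (a b : A) : (triList n a b).length = 3 * n := by
  induction n with
  | zero => rfl
  | succ n ih => simp [triList, ih]; ring

omit [CommRing A] in
theorem triList_append (m n : ℕ) (a b : A) :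
    triList m a b ++ triList n a b = triList (m + n) a b := by
  induction m with
  | zero => simp [triList]
  | succ m ih => simp only [triList, List.cons_append, ih]; rw [Nat.succ_add]; rfl

omit [CommRing A] in
theorem triList_succ (q : ℕ) (u v : A) :
    triList (q + 1) u v = triList q u v ++ [u, v, v] := by
  have := triList_append q 1 u v
  simpa [triList] using this.symm

def cf (u v : A) (q : ℕ) : A := (-1) ^ (q + 1) * (u ^ q * v - v ^ (q + 1))

theorem mMat_triList (u v : A) (hv : u * v = 1) (q : ℕ) :
    mMat (triList q u v) = !![(-u) ^ q, cf u v q; 0, (-v) ^ q] := by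
  induction q with
  | zero =>
    show (1 : Matrix (Fin 2) (Fin 2) A) = _
    rw [Matrix.one_fin_two]
    norm_num [cf]
  | succ q ih =>
    rw [triList_succ, mMat_append, ih]
    have hB : mMat [u, v, v] = !![-u, 1 - v * v; 0, -v] := by
      show (((1 : Matrix (Fin 2) (Fin 2) A) * _) * _) * _ = _
      rw [one_mul, Matrix.mul_fin_two, Matrix.mul_fin_two]
      ext i j
      fin_cases i <;> fin_cases j <;> simp <;>
        first
        | ring1
        | linear_combination hv
        | linear_combination (-1 : A) * hv
        | linear_combination v * hv
        | linear_combination (-v) * hv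
    rw [hB, Matrix.mul_fin_two]
    ext i j
    fin_cases i <;> fin_cases j <;> simp [cf, pow_succ] <;>
      first
      | ring1
      | linear_combination ((-1 : A) ^ q * v ^ q) * hv
      | linear_combination (-((-1 : A) ^ q * v ^ q)) * hv

theorem mMat_single {A : Type*} [CommRing A] (a : A) : mMat [a] = !![a, -1; 1, 0] := by
  simp [mMat]

section ListLemmas

variable {α : Type*} (u v : α)

theorem triList_rotate_three {k : ℕ} (hk : 0 < k) :
    (triList k u v).rotate 3 = triList k u v := by
  obtain ⟨K, rfl⟩ : ∃ K, k = K + 1 := ⟨k - 1, by omega⟩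
  rw [List.rotate_eq_drop_append_take (by rw [triList_length]; omega)]
  show triList K u v ++ [u, v, v] = _
  rw [show [u, v, v] = triList 1 u v from rfl, triList_append]

theorem triList_rotate_mod {k : ℕ} (hk : 0 < k) (s r : ℕ) :
    (triList k u v).rotate (3 * s + r) = (triList k u v).rotate r := by
  induction s with
  | zero => simp
  | succ s ih =>
    rw [show 3 * (s + 1) + r = 3 + (3 * s + r) by ring, ← List.rotate_rotate,
      triList_rotate_three u v hk, ih]

theorem triList_rotate_one {k : ℕ} (hk : 0 < k) :
    (triList k u v).rotate 1 = v :: v :: triList (k - 1) u v ++ [u] := by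
  obtain ⟨K, rfl⟩ : ∃ K, k = K + 1 := ⟨k - 1, by omega⟩
  rw [List.rotate_eq_drop_append_take (by rw [triList_length]; omega)]
  rfl

theorem triList_rotate_two {k : ℕ} (hk : 0 < k) :
    (triList k u v).rotate 2 = v :: triList (k - 1) u v ++ [u, v] := by
  obtain ⟨K, rfl⟩ : ∃ K, k = K + 1 := ⟨k - 1, by omega⟩
  rw [List.rotate_eq_drop_append_take (by rw [triList_length]; omega)]
  rfl

theorem triList_reverse {k : ℕ} (hk : 0 < k) :
    (triList k u v).reverse = v :: v :: triList (k - 1) u v ++ [u] := by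
  obtain ⟨K, rfl⟩ : ∃ K, k = K + 1 := ⟨k - 1, by omega⟩
  simp only [Nat.add_sub_cancel]
  induction K with
  | zero => rfl
  | succ K ih =>
    rw [show triList (K + 1 + 1) u v = u :: v :: v :: triList (K + 1) u v from rfl,
      List.reverse_cons, List.reverse_cons, List.reverse_cons, ih (Nat.succ_pos K),
      triList_succ]
    simp

theorem take_triList0 : ∀ q K, q ≤ K → (triList K u v).take (3 * q) = triList q u v := by
  intro q
  induction q with
  | zero => simp [triList]
  | succ q ih =>
    intro K hK
    obtain ⟨K', rfl⟩ : ∃ K', K = K' + 1 := ⟨K - 1, by omega⟩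
    rw [show 3 * (q + 1) = 3 * q + 1 + 1 + 1 by ring]
    show (u :: v :: v :: triList K' u v).take _ = _
    rw [List.take_succ_cons, List.take_succ_cons, List.take_succ_cons, ih K' (by omega)]
    rfl

theorem take_triList1 : ∀ q K, q < K → (triList K u v).take (3 * q + 1) = triList q u v ++ [u] := by
  intro q
  induction q with
  | zero =>
    intro K hK
    obtain ⟨K', rfl⟩ : ∃ K', K = K' + 1 := ⟨K - 1, by omega⟩
    rfl
  | succ q ih =>
    intro K hK
    obtain ⟨K', rfl⟩ : ∃ K', K = K' + 1 := ⟨K - 1, by omega⟩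
    rw [show 3 * (q + 1) + 1 = 3 * q + 1 + 1 + 1 + 1 by ring]
    show (u :: v :: v :: triList K' u v).take _ = _
    rw [List.take_succ_cons, List.take_succ_cons, List.take_succ_cons, ih K' (by omega)]
    rfl

theorem take_triList2 : ∀ q K, q < K → (triList K u v).take (3 * q + 2) = triList q u v ++ [u, v] := by
  intro q
  induction q with
  | zero =>
    intro K hK
    obtain ⟨K', rfl⟩ : ∃ K', K = K' + 1 := ⟨K - 1, by omega⟩
    rfl
  | succ q ih =>
    intro K hK
    obtain ⟨K', rfl⟩ : ∃ K', K = K' + 1 := ⟨K - 1, by omega⟩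
    rw [show 3 * (q + 1) + 2 = 3 * q + 2 + 1 + 1 + 1 by ring]
    show (u :: v :: v :: triList K' u v).take _ = _
    rw [List.take_succ_cons, List.take_succ_cons, List.take_succ_cons, ih K' (by omega)]
    rfl

theorem drop_rotate (l : List α) (m n : ℕ) (hm : m ≤ l.length) :
    (l.rotate n).drop m = (l.rotate (n + m)).take (l.length - m) := by
  rw [← List.rotate_rotate,
    List.rotate_eq_drop_append_take (show m ≤ (l.rotate n).length by simpa using hm),
    List.take_left' (by simp)]

end ListLemmas

section FieldLemmas

variable {K : Type*} [Field K] (u v : K)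

theorem quiddity_triList' (hv : u * v = 1) (n : ℕ) (h1 : u ^ n = 1 ∨ u ^ n = -1) :
    mMat (triList n u v) = 1 ∨ mMat (triList n u v) = -1 := by
  have hn : u ^ n * v ^ n = 1 := by rw [← mul_pow, hv, one_pow]
  have hvn : v ^ n = u ^ n := by
    rcases h1 with h | h <;> rw [h] at hn ⊢ <;>
      first
      | linear_combination hn
      | linear_combination -hn
  have hm : mMat (triList n u v) = ((-1) ^ n * u ^ n) • (1 : Matrix (Fin 2) (Fin 2) K) := by
    rw [mMat_triList u v hv n, Matrix.one_fin_two, Matrix.smul_of]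
    ext i j
    fin_cases i <;> fin_cases j <;>
      simp [cf, hvn, pow_succ, neg_pow u, neg_pow v] <;> ring_nf <;>
      simp [hvn] <;> ring
  have he : ((-1 : K) ^ n * u ^ n = 1) ∨ ((-1 : K) ^ n * u ^ n = -1) := by
    rcases Nat.even_or_odd n with hp | hp <;>
      rcases h1 with h | h <;>
        simp [h, hp.neg_one_pow]
  rcases he with h | h
  · left; rw [hm, h, one_smul]
  · right; rw [hm, h, neg_smul, one_smul]

theorem pow_eq_one_of_quiddity (hv : u * v = 1) (n : ℕ)
    (h : mMat (triList n u v) = 1 ∨ mMat (triList n u v) = -1) : u ^ (2 * n) = 1 := by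
  have h00 : (-u) ^ n = 1 ∨ (-u) ^ n = -1 := by
    rcases h with h | h <;> rw [mMat_triList u v hv n] at h <;>
      [left; right] <;>
      have := congrFun (congrFun h 0) 0 <;>
      simpa using this
  have h2 : ((-u) ^ n) ^ 2 = 1 := by rcases h00 with h | h <;> rw [h] <;> norm_num
  have h3 : ((-u) ^ n) ^ 2 = u ^ (2 * n) := by
    rw [← pow_mul, Even.neg_pow ⟨n, by ring⟩, mul_comm]
  rw [← h3]; exact h2

theorem mMat_pair {A : Type*} [CommRing A] (a b : A) :
    mMat [a, b] = !![b * a - 1, -b; a, -1] := by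
  show (1 : Matrix (Fin 2) (Fin 2) A) * _ * _ = _
  rw [one_mul, Matrix.mul_fin_two]
  ext i j
  fin_cases i <;> fin_cases j <;> simp <;> ring

theorem E0b (hv : u * v = 1) (q : ℕ) :
    mMat (triList q u v ++ [u]) 0 0 = (-1) ^ q * u ^ (q + 1) := by
  rw [mMat_append, mMat_single, mMat_triList u v hv, Matrix.mul_fin_two]
  simp [pow_succ, neg_pow u]
  ring

theorem E0c (hv : u * v = 1) (q : ℕ) :
    mMat (triList q u v ++ [u, v]) 0 0 = 0 := by
  rw [mMat_append, mMat_pair, mMat_triList u v hv, Matrix.mul_fin_two]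
  simp only [Matrix.cons_val', Matrix.cons_val_zero, Matrix.empty_val',
    Matrix.cons_val_fin_one, Matrix.cons_val_one, Matrix.head_cons, Matrix.head_fin_const,
    Matrix.of_apply]
  linear_combination ((-1 : K) ^ q * u ^ q) * hv

theorem E2a (hv : u * v = 1) (q : ℕ) :
    mMat (v :: triList q u v) 0 0 = (-1) ^ q * v ^ (q + 1) := by
  rw [mMat_cons, mMat_triList u v hv, Matrix.mul_fin_two]
  simp [cf, pow_succ, neg_pow u, neg_pow v]
  ring

theorem E2b (hv : u * v = 1) (q : ℕ) :
    mMat (v :: triList q u v ++ [u]) 0 0 = 0 := by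
  have : (v :: triList q u v ++ [u]) = v :: (triList q u v ++ [u]) := rfl
  rw [this, mMat_cons, mMat_append, mMat_single, mMat_triList u v hv,
    Matrix.mul_fin_two, Matrix.mul_fin_two]
  simp [cf, pow_succ, neg_pow u, neg_pow v]
  linear_combination ((-1 : K) ^ q * v ^ q) * hv

theorem E2c (hv : u * v = 1) (q : ℕ) :
    mMat (v :: triList q u v ++ [u, v]) 0 0 = (-1) ^ (q + 1) * v ^ (q + 1) := by
  have : (v :: triList q u v ++ [u, v]) = v :: (triList q u v ++ [u, v]) := rfl
  rw [this, mMat_cons, mMat_append, mMat_pair, mMat_triList u v hv,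
    Matrix.mul_fin_two, Matrix.mul_fin_two]
  simp [cf, pow_succ, neg_pow u, neg_pow v]
  linear_combination ((-1 : K) ^ q * v ^ (q + 1)) * hv

theorem E1a (hv : u * v = 1) (q : ℕ) :
    mMat (v :: v :: triList q u v) =
      !![(-1) ^ q * (v ^ (q + 2) - u ^ q), (-1) ^ (q + 1) * v ^ (q + 1);
         (-1) ^ q * v ^ (q + 1), (-1) ^ (q + 1) * v ^ q] := by
  rw [mMat_cons, mMat_cons, mMat_triList u v hv, Matrix.mul_fin_two, Matrix.mul_fin_two]
  ext i j
  fin_cases i <;> fin_cases j <;>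
    simp [cf, pow_succ, neg_pow u, neg_pow v] <;> ring

theorem E1b (hv : u * v = 1) (q : ℕ) :
    mMat (v :: v :: triList q u v ++ [u]) 0 0 = (-1) ^ (q + 1) * u ^ (q + 1) := by
  have : (v :: v :: triList q u v ++ [u]) = v :: v :: (triList q u v ++ [u]) := rfl
  rw [this, mMat_cons, mMat_cons, mMat_append, mMat_single, mMat_triList u v hv,
    Matrix.mul_fin_two, Matrix.mul_fin_two, Matrix.mul_fin_two]
  simp [cf, pow_succ, neg_pow u, neg_pow v]
  linear_combination ((-1 : K) ^ q * v ^ (q + 1)) * hv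

theorem E1c (hv : u * v = 1) (q : ℕ) :
    mMat (v :: v :: triList q u v ++ [u, v]) 0 0 = (-1) ^ (q + 1) * v ^ (q + 2) := by
  have : (v :: v :: triList q u v ++ [u, v]) = v :: v :: (triList q u v ++ [u, v]) := rfl
  rw [this, mMat_cons, mMat_cons, mMat_append, mMat_pair, mMat_triList u v hv,
    Matrix.mul_fin_two, Matrix.mul_fin_two, Matrix.mul_fin_two]
  simp [cf, pow_succ, neg_pow u, neg_pow v]
  linear_combination ((-1 : K) ^ q * (v ^ (q + 2) - u ^ q)) * hv

theorem construct_reducible (hv : u * v = 1) (k l : ℕ) (hl1 : 1 ≤ l) (hl2 : l + 1 ≤ k)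
    (e : K) (he : e = 1 ∨ e = -1) (hcond : u ^ (2 * l) + e * u ^ (l + 1) - 1 = 0) :
    QuiddityReducible (triList k u v) := by
  obtain ⟨q, rfl⟩ : ∃ q, l = q + 1 := ⟨l - 1, by omega⟩
  have hpow : ∀ n : ℕ, u ^ n * v ^ n = 1 := fun n => by rw [← mul_pow, hv, one_pow]
  have he2 : e * e = 1 := by rcases he with h | h <;> rw [h] <;> norm_num
  have hW : v ^ (q + 2) - u ^ q = e := by
    linear_combination (-(v ^ (q + 2))) * hcond + (u ^ q + e) * hpow (q + 2)
  set x : K := e * v ^ (q + 1) with hx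
  set w : List K := v :: v :: triList q u v with hwdef
  set b : List K := x :: (w ++ [x]) with hbdef
  set a : List K := (u - x) :: (v :: v :: triList (k - (q + 1) - 1) u v ++ [u - x]) with hadef
  have hWm : mMat w = !![(-1) ^ q * e, (-1) ^ (q + 1) * v ^ (q + 1);
      (-1) ^ q * v ^ (q + 1), (-1) ^ (q + 1) * v ^ q] := by
    rw [hwdef, E1a u v hv q, hW]
  have hmb : mMat b = ((-1) ^ (q + 1) * e) • (1 : Matrix (Fin 2) (Fin 2) K) := by
    rw [hbdef, mMat_cons, mMat_append, mMat_single, hWm,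
      Matrix.mul_fin_two, Matrix.mul_fin_two]
    ext i j
    fin_cases i <;> fin_cases j <;> simp [hx, Matrix.one_apply] <;>
      first
      | ring1
      | linear_combination ((-1 : K) ^ q * (e * v ^ (2 * q + 2) - v ^ q)) * he2 +
          (-((-1 : K) ^ q * e * v ^ q)) * hW + (-((-1 : K) ^ q * e)) * hpow q
      | linear_combination (-((-1 : K) ^ q * v ^ (q + 1))) * he2
      | linear_combination ((-1 : K) ^ q * v ^ (q + 1)) * he2
  have hbq : IsQuiddity b := by
    have hsc : ((-1 : K) ^ (q + 1) * e = 1) ∨ ((-1 : K) ^ (q + 1) * e = -1) := by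
      rcases Nat.even_or_odd (q + 1) with hp | hp <;> rcases he with h | h <;>
        simp [h, hp.neg_one_pow]
    rcases hsc with h | h
    · left; rw [hmb, h, one_smul]
    · right; rw [hmb, h, neg_smul, one_smul]
  refine ⟨a, b, ?_, ?_, hbq, ?_⟩
  · rw [hadef]; simp [triList_length]
  · rw [hbdef, hwdef]; simp [triList_length]
  · left
    have hop : oplus a b = triList k u v := by
      have hb2 : b = (x :: w) ++ [x] := rfl
      have h1 : a.headD 0 = u - x := rfl
      have h2 : b.getLastD 0 = x := by rw [hb2, List.getLastD_concat]
      have h3 : a.tail.dropLast = v :: v :: triList (k - (q + 1) - 1) u v := by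
        rw [hadef, List.tail_cons,
          show (v :: v :: triList (k - (q + 1) - 1) u v ++ [u - x])
            = (v :: v :: triList (k - (q + 1) - 1) u v) ++ [u - x] from rfl,
          List.dropLast_concat]
      have h4 : a.getLastD 0 = u - x := by
        rw [hadef,
          show ((u - x) :: (v :: v :: triList (k - (q + 1) - 1) u v ++ [u - x]))
            = ((u - x) :: (v :: v :: triList (k - (q + 1) - 1) u v)) ++ [u - x] from rfl,
          List.getLastD_concat]
      have h5 : b.headD 0 = x := rfl
      have h6 : b.tail.dropLast = w := by
        rw [hbdef, List.tail_cons, List.dropLast_concat]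
      rw [oplus, h1, h2, h3, h4, h5, h6, sub_add_cancel, hwdef]
      show u :: (v :: v :: (triList (k - (q + 1) - 1) u v ++ triList (q + 1) u v)) = _
      rw [triList_append, show k - (q + 1) - 1 + (q + 1) = k - 1 by omega]
      obtain ⟨K', rfl⟩ : ∃ K', k = K' + 1 := ⟨k - 1, by omega⟩
      rfl
    rw [hop]
theorem exists_of_reducible (hv : u * v = 1) (hu1 : u ≠ 1) (hu2 : u ≠ -1) (k : ℕ) (hk : 0 < k)
    (hsmall : ∀ n, 0 < n → n < k → u ^ (2 * n) = 1 → False)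
    (hred : QuiddityReducible (triList k u v)) :
    ∃ l, 1 ≤ l ∧ l ≤ k - 1 ∧
      (u ^ (2 * l) + u ^ (l + 1) - 1 = 0 ∨ u ^ (2 * l) - u ^ (l + 1) - 1 = 0) := by
  have hpow : ∀ n : ℕ, u ^ n * v ^ n = 1 := fun n => by rw [← mul_pow, hv, one_pow]
  obtain ⟨a, b, ha, hb, hQb, heq⟩ := hred
  obtain ⟨x, t, rfl⟩ : ∃ x t, b = x :: t := by
    cases b with
    | nil => simp at hb
    | cons x t => exact ⟨x, t, rfl⟩
  have ht : t ≠ [] := by rintro rfl; simp at hb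
  set w := t.dropLast with hwdef
  set y := t.getLast ht with hydef
  have htw : t = w ++ [y] := (List.dropLast_append_getLast ht).symm
  have hW : mMat w 0 0 = 1 ∨ mMat w 0 0 = -1 := by
    have hm : mMat (x :: t) = (!![y, -1; 1, 0] * mMat w) * !![x, -1; 1, 0] := by
      conv_lhs => rw [htw]
      rw [show (x :: (w ++ [y])) = x :: (w ++ [y]) from rfl, mMat_cons, mMat_append, mMat_single]
    rw [Matrix.eta_fin_two (mMat w), Matrix.mul_fin_two, Matrix.mul_fin_two] at hm
    rcases hQb with h | h
    · right
      rw [hm] at h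
      have h11 := congrFun (congrFun h 1) 1
      simp at h11
      first
      | exact h11
      | linear_combination h11
      | linear_combination -h11
    · left
      rw [hm] at h
      have h11 := congrFun (congrFun h 1) 1
      simp at h11
      first
      | exact h11
      | linear_combination h11
      | linear_combination -h11
  have hosplit : oplus a (x :: t) =
      (((a.headD 0 + (x :: t).getLastD 0) :: a.tail.dropLast) ++ [a.getLastD 0 + x]) ++ w := by
    rw [oplus]
    simp
    exact hwdef.symm
  set P := ((a.headD 0 + (x :: t).getLastD 0) :: a.tail.dropLast) ++ [a.getLastD 0 + x] with hP
  have hPlen : P.length = a.length := by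
    rw [hP]
    simp [List.length_dropLast, List.length_tail]
    omega
  have hrot : ∃ n, (triList k u v).rotate n = P ++ w := by
    rcases heq with h | h
    · obtain ⟨n, hn⟩ := h
      exact ⟨n, by rw [hn, hosplit]⟩
    · obtain ⟨n, hn⟩ := h
      refine ⟨1 + n, ?_⟩
      rw [← List.rotate_rotate, triList_rotate_one u v hk, ← triList_reverse u v hk, hn, hosplit]
  obtain ⟨n, hn⟩ := hrot
  have hwlen0 : w.length = t.length - 1 := by rw [hwdef, List.length_dropLast]
  have htlen : 2 ≤ t.length := by
    simp only [List.length_cons] at hb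
    omega
  have h3k : a.length + w.length = 3 * k := by
    have := congrArg List.length hn
    rw [List.length_rotate, triList_length, List.length_append, hPlen] at this
    omega
  set j := w.length with hj
  have hj1 : 1 ≤ j := by omega
  have hj2 : j ≤ 3 * k - 3 := by omega
  have hwtake : w = ((triList k u v).rotate (n + a.length)).take j := by
    calc w = (P ++ w).drop P.length := List.drop_left.symm
      _ = ((triList k u v).rotate n).drop a.length := by rw [hn, hPlen]
      _ = ((triList k u v).rotate (n + a.length)).take ((triList k u v).length - a.length) :=
          drop_rotate _ _ _ (by rw [triList_length]; omega)
      _ = ((triList k u v).rotate (n + a.length)).take j := by rw [triList_length]; congr 1; omega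
  have hc3 : (triList k u v).rotate (n + a.length) = (triList k u v).rotate ((n + a.length) % 3) := by
    conv_lhs => rw [show n + a.length = 3 * ((n + a.length) / 3) + (n + a.length) % 3 from
      (Nat.div_add_mod _ _).symm]
    exact triList_rotate_mod u v hk _ _
  rw [hc3] at hwtake
  have key : ∀ (m : ℕ) (z : K), (z = 1 ∨ z = -1) → z * z = u ^ (2 * m) → 0 < m → m < k → False := by
    intro m z hz hzz hm1 hm2
    apply hsmall m hm1 hm2
    rw [← hzz]
    rcases hz with h | h <;> rw [h] <;> norm_num
  have keyv : ∀ (m : ℕ) (z : K), (z = 1 ∨ z = -1) → z * z = v ^ (2 * m) → 0 < m → m < k → False := by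
    intro m z hz hzz hm1 hm2
    apply hsmall m hm1 hm2
    have h1 : v ^ (2 * m) = 1 := by
      rw [← hzz]; rcases hz with h | h <;> rw [h] <;> norm_num
    have h2 := hpow (2 * m)
    rw [h1, mul_one] at h2
    exact h2
  have hz01 : ¬ ((0 : K) = 1 ∨ (0 : K) = -1) := by
    rintro (h | h)
    · exact one_ne_zero h.symm
    · exact one_ne_zero (by linear_combination h)
  have hsq : ∀ (m : ℕ) (c : K), ((-1) ^ m * c) * ((-1) ^ m * c) = c * c := by
    intro m c
    rw [mul_mul_mul_comm, ← mul_pow]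
    norm_num
  have hr3 : (n + a.length) % 3 = 0 ∨ (n + a.length) % 3 = 1 ∨ (n + a.length) % 3 = 2 := by omega
  set q := j / 3 with hq3
  rcases hr3 with hr | hr | hr
  · -- rotation ≡ 0
    rw [hr, List.rotate_zero] at hwtake
    have hjmod : j = 3 * q ∨ j = 3 * q + 1 ∨ j = 3 * q + 2 := by omega
    rcases hjmod with hm | hm | hm
    · rw [hm, take_triList0 u v q k (by omega)] at hwtake
      exfalso
      rw [hwtake, mMat_triList u v hv q] at hW
      simp only [Matrix.of_apply, Matrix.cons_val_zero] at hW
      exact key q _ hW (by rw [← mul_pow, neg_mul_neg, ← sq, ← pow_mul]) (by omega) (by omega)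
    · rw [hm, take_triList1 u v q k (by omega)] at hwtake
      exfalso
      rw [hwtake, E0b u v hv q] at hW
      exact key (q + 1) _ hW (by rw [hsq, ← pow_add]; ring_nf) (by omega) (by omega)
    · rw [hm, take_triList2 u v q k (by omega)] at hwtake
      exfalso
      rw [hwtake, E0c u v hv q] at hW
      exact hz01 hW
  · -- rotation ≡ 1
    rw [hr, triList_rotate_one u v hk] at hwtake
    rw [show (v :: v :: triList (k - 1) u v ++ [u]) = (v :: v :: triList (k - 1) u v) ++ [u]
      from rfl, List.take_append_of_le_length (by simp [triList_length]; omega)] at hwtake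
    rcases Nat.lt_or_ge j 2 with hjlt | hjge
    · -- j = 1, w = [v]
      have hj'0 : j = 1 := by omega
      rw [hj'0, List.take_succ_cons, List.take_zero] at hwtake
      exfalso
      rw [hwtake, mMat_single] at hW
      simp only [Matrix.of_apply, Matrix.cons_val_zero] at hW
      rcases hW with h | h
      · rw [h, mul_one] at hv
        exact hu1 hv
      · rw [h] at hv
        exact hu2 (by linear_combination -hv)
    · obtain ⟨j'', hj''⟩ : ∃ j'', j = j'' + 2 := ⟨j - 2, by omega⟩
      rw [hj'', List.take_succ_cons, List.take_succ_cons] at hwtake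
      set q' := j'' / 3 with hq'
      have hjmod : j'' = 3 * q' ∨ j'' = 3 * q' + 1 ∨ j'' = 3 * q' + 2 := by omega
      rcases hjmod with hm | hm | hm
      · -- GOOD case
        rw [hm, take_triList0 u v q' (k - 1) (by omega)] at hwtake
        refine ⟨q' + 1, by omega, by omega, ?_⟩
        rw [hwtake, E1a u v hv q'] at hW
        simp only [Matrix.of_apply, Matrix.cons_val_zero] at hW
        have hne : v ^ (q' + 2) - u ^ q' = 1 ∨ v ^ (q' + 2) - u ^ q' = -1 := by
          rcases Nat.even_or_odd q' with hp | hp <;>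
            rw [hp.neg_one_pow] at hW <;> rcases hW with h | h
          · exact Or.inl (by linear_combination h)
          · exact Or.inr (by linear_combination h)
          · exact Or.inr (by linear_combination -h)
          · exact Or.inl (by linear_combination -h)
        rcases hne with h | h
        · left
          linear_combination (-(u ^ (q' + 2))) * h + hpow (q' + 2)
        · right
          linear_combination (-(u ^ (q' + 2))) * h + hpow (q' + 2)
      · rw [hm, take_triList1 u v q' (k - 1) (by omega)] at hwtake
        exfalso
        rw [show (v :: v :: (triList q' u v ++ [u])) = v :: v :: triList q' u v ++ [u] from rfl]
          at hwtake
        rw [hwtake, E1b u v hv q'] at hW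
        exact key (q' + 1) _ hW (by rw [hsq, ← pow_add]; ring_nf) (by omega) (by omega)
      · rw [hm, take_triList2 u v q' (k - 1) (by omega)] at hwtake
        exfalso
        rw [show (v :: v :: (triList q' u v ++ [u, v])) = v :: v :: triList q' u v ++ [u, v]
          from rfl] at hwtake
        rw [hwtake, E1c u v hv q'] at hW
        exact keyv (q' + 2) _ hW (by rw [hsq, ← pow_add]; ring_nf) (by omega) (by omega)
  · -- rotation ≡ 2
    rw [hr, triList_rotate_two u v hk] at hwtake
    rw [show (v :: triList (k - 1) u v ++ [u, v]) = (v :: triList (k - 1) u v) ++ [u, v]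
      from rfl, List.take_append_of_le_length (by simp [triList_length]; omega)] at hwtake
    obtain ⟨j', hj'⟩ : ∃ j', j = j' + 1 := ⟨j - 1, by omega⟩
    rw [hj', List.take_succ_cons] at hwtake
    set q' := j' / 3 with hq'
    have hjmod : j' = 3 * q' ∨ j' = 3 * q' + 1 ∨ j' = 3 * q' + 2 := by omega
    rcases hjmod with hm | hm | hm
    · rw [hm, take_triList0 u v q' (k - 1) (by omega)] at hwtake
      exfalso
      rw [hwtake, E2a u v hv q'] at hW
      exact keyv (q' + 1) _ hW (by rw [hsq, ← pow_add]; ring_nf) (by omega) (by omega)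
    · rw [hm, take_triList1 u v q' (k - 1) (by omega)] at hwtake
      exfalso
      rw [show (v :: (triList q' u v ++ [u])) = v :: triList q' u v ++ [u] from rfl] at hwtake
      rw [hwtake, E2b u v hv q'] at hW
      exact hz01 hW
    · rw [hm, take_triList2 u v q' (k - 1) (by omega)] at hwtake
      exfalso
      rw [show (v :: (triList q' u v ++ [u, v])) = v :: triList q' u v ++ [u, v] from rfl] at hwtake
      rw [hwtake, E2c u v hv q'] at hW
      exact keyv (q' + 1) _ hW (by rw [hsq, ← pow_add]; ring_nf) (by omega) (by omega)

theorem sym_shift (hu0 : u ≠ 0) (k l : ℕ) (h2k : u ^ (2 * k) = 1)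
    (hl1 : 1 ≤ l) (hl2 : l ≤ k - 1)
    (hc : u ^ (2 * l) + u ^ (l + 1) - 1 = 0 ∨ u ^ (2 * l) - u ^ (l + 1) - 1 = 0) :
    ∃ l', 1 ≤ l' ∧ l' ≤ k / 2 ∧
      (u ^ (2 * l') + u ^ (l' + 1) - 1 = 0 ∨ u ^ (2 * l') - u ^ (l' + 1) - 1 = 0) := by
  have hk2 : 2 ≤ k := by omega
  by_cases hcase : l ≤ k / 2
  · exact ⟨l, hl1, hcase, hc⟩
  · obtain ⟨m, hm2⟩ : ∃ m, l + m = k := ⟨k - l, by omega⟩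
    refine ⟨m, by omega, by omega, ?_⟩
    have hE : u ^ (l + m) * u ^ (l + m) = 1 := by
      rw [← pow_add, show l + m + (l + m) = 2 * k by omega]
      exact h2k
    have h2l0 : u ^ (2 * l) ≠ 0 := pow_ne_zero _ hu0
    have cancel : ∀ z : K, u ^ (2 * l) * z = 0 → z = 0 := by
      intro z hz
      rcases mul_eq_zero.mp hz with h0 | h0
      · exact absurd h0 h2l0
      · exact h0
    have hklm : u ^ (l + m) = 1 ∨ u ^ (l + m) = -1 := mul_self_eq_one_iff.mp hE
    rcases hklm with hs | hs <;> rcases hc with h | h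
    · right
      apply cancel
      linear_combination hE - u ^ (l + 1) * hs - h
    · left
      apply cancel
      linear_combination hE + u ^ (l + 1) * hs - h
    · left
      apply cancel
      linear_combination hE + u ^ (l + 1) * hs - h
    · right
      apply cancel
      linear_combination hE - u ^ (l + 1) * hs - h

end FieldLemmas

end Quiddity

open Quiddity

/-- for `u ≠ ±1`, the `u`-trinomial minimal solution of size `m = 3k` is
irreducible iff `u` is not a root of `X^{2l} ± X^{l+1} − 1` for `1 ≤ l ≤ ⌊m/6⌋`. -/
theorem stmt13 (K : Type*) [Field K] [Fintype K] (u : Kˣ)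
    (hu1 : (u : K) ≠ 1) (hu2 : (u : K) ≠ -1) (k : ℕ) (hk : 0 < k)
    (hq : IsQuiddity (triList k (u : K) ((u⁻¹ : Kˣ) : K)))
    (hmin : ∀ j, 0 < j → IsQuiddity (triList j (u : K) ((u⁻¹ : Kˣ) : K)) → k ≤ j) :
    ¬ QuiddityReducible (triList k (u : K) ((u⁻¹ : Kˣ) : K)) ↔
      ∀ l : ℕ, 1 ≤ l → l ≤ 3 * k / 6 →
        (u : K) ^ (2 * l) + (u : K) ^ (l + 1) - 1 ≠ 0 ∧
        (u : K) ^ (2 * l) - (u : K) ^ (l + 1) - 1 ≠ 0 := by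
  set U : K := (u : K) with hU
  set V : K := ((u⁻¹ : Kˣ) : K) with hV
  have hv : U * V = 1 := u.mul_inv
  have hu0 : U ≠ 0 := u.ne_zero
  have h2k : U ^ (2 * k) = 1 := pow_eq_one_of_quiddity U V hv k hq
  have hsmall : ∀ n, 0 < n → n < k → U ^ (2 * n) = 1 → False := by
    intro n h1 h2 h3
    have hn1 : U ^ n = 1 ∨ U ^ n = -1 := mul_self_eq_one_iff.mp
      (by rw [← pow_add, show n + n = 2 * n by ring]; exact h3)
    have := hmin n h1 (quiddity_triList' U V hv n hn1)
    omega
  have hdiv : 3 * k / 6 = k / 2 := by omega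
  rw [hdiv]
  constructor
  · intro hirr l hl1 hl2
    constructor
    · intro hcon
      exact hirr (construct_reducible U V hv k l hl1 (by omega) 1 (Or.inl rfl)
        (by linear_combination hcon))
    · intro hcon
      exact hirr (construct_reducible U V hv k l hl1 (by omega) (-1) (Or.inr rfl)
        (by linear_combination hcon))
  · intro hall hred
    obtain ⟨l, hl1, hl2, hc⟩ := exists_of_reducible U V hv hu1 hu2 k hk hsmall hred
    obtain ⟨l', h1', h2', hc'⟩ := sym_shift U hu0 k l h2k hl1 hl2 hc
    rcases hc' with h | h
    · exact (hall l' h1' h2').1 h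
    · exact (hall l' h1' h2').2 h
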